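/- Let M₁ and M₂ be nonsingular 2×2 integer matrices and let 𝒮₁ ⊆ GL(2,ℤ) be a regular subset. Then the set {A ∈ GL(2,ℤ) : there exists A₁ ∈ 𝒮₁ with A₁ · M₁ · A = M₂} is a regular subset of GL(2,ℤ). -/

import Mathlib

/-- 2×2 integer matrices. -/
abbrev M2 := Matrix (Fin 2) (Fin 2) ℤ

/-- A matrix belongs to GL(2,ℤ), i.e. has determinant ±1. -/
def IsGL (A : M2) : Prop := A.det = 1 ∨ A.det = -1

/-- The four-letter alphabet Σ = {X, N, S, R}. -/
inductive Alph : Type | X | N | S | R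
deriving DecidableEq

instance instFintypeAlph : Fintype Alph :=
  ⟨{Alph.X, Alph.N, Alph.S, Alph.R}, by intro x; cases x <;> decide⟩

/-- The matrices assigned to letters of Σ. -/
def phiLetter : Alph → M2
  | Alph.X => !![-1, 0; 0, -1]
  | Alph.N => !![1, 0; 0, -1]
  | Alph.S => !![0, -1; 1, 0]
  | Alph.R => !![0, -1; 1, 1]

/-- The monoid homomorphism φ : Σ* → GL(2,ℤ) (valued in matrices). -/
def phi (w : List Alph) : M2 := (w.map phiLetter).prod

/-- A word over Σ is canonical: no subword SS or RRR, the letter N occurs only in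
the first position, and X occurs only in the first position or immediately after N. -/
def Canonical (w : List Alph) : Prop :=
  ¬ [Alph.S, Alph.S] <:+: w ∧
  ¬ [Alph.R, Alph.R, Alph.R] <:+: w ∧
  (∀ i : Fin w.length, w.get i = Alph.N → (i : ℕ) = 0) ∧
  (∀ i : Fin w.length, w.get i = Alph.X →
      (i : ℕ) = 0 ∨ ((i : ℕ) = 1 ∧ w.get ⟨0, Nat.lt_of_le_of_lt (Nat.zero_le _) i.isLt⟩ = Alph.N))

/-- A subset of GL(2,ℤ) is regular if it is the image under φ of a regular language. -/
def RegularSubset (S : Set M2) : Prop :=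
  ∃ L : Language Alph, L.IsRegular ∧ phi '' L = S

namespace SolAux
open Alph

theorem phi_nil : phi [] = 1 := rfl

theorem phi_cons (a : Alph) (w : List Alph) : phi (a :: w) = phiLetter a * phi w := by
  simp [phi]

theorem phi_append (u v : List Alph) : phi (u ++ v) = phi u * phi v := by
  simp [phi]

theorem phi_singleton (a : Alph) : phi [a] = phiLetter a := by
  simp [phi]

theorem det_phiLetter (a : Alph) : (phiLetter a).det = 1 ∨ (phiLetter a).det = -1 := by
  cases a <;> simp [phiLetter, Matrix.det_fin_two_of]

theorem isGL_one : IsGL 1 := Or.inl Matrix.det_one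

theorem isGL_mul {A B : M2} (hA : IsGL A) (hB : IsGL B) : IsGL (A * B) := by
  rcases hA with h | h <;> rcases hB with h' | h' <;>
    simp [IsGL, Matrix.det_mul, h, h']

theorem isGL_phi (w : List Alph) : IsGL (phi w) := by
  induction w with
  | nil => exact isGL_one
  | cons a w ih => rw [phi_cons]; exact isGL_mul (det_phiLetter a) ih

/-- Integer inverse of a GL(2,ℤ) matrix. -/
def intInv (A : M2) : M2 := A.det • A.adjugate

theorem intInv_mul {A : M2} (hA : IsGL A) : intInv A * A = 1 := by
  rw [intInv, Matrix.smul_mul, Matrix.adjugate_mul]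
  rcases hA with h | h <;> rw [h] <;> norm_num

theorem mul_intInv {A : M2} (hA : IsGL A) : A * intInv A = 1 := by
  rw [intInv, Matrix.mul_smul, Matrix.mul_adjugate]
  rcases hA with h | h <;> rw [h] <;> norm_num

theorem isGL_intInv {A : M2} (hA : IsGL A) : IsGL (intInv A) := by
  have h := intInv_mul hA
  have hd : (intInv A).det * A.det = 1 := by
    rw [← Matrix.det_mul, h, Matrix.det_one]
  rcases hA with h' | h' <;> rw [h'] at hd <;> [left; right] <;> omega

theorem eq_intInv_of_mul_eq_one {A B : M2} (hA : IsGL A) (h : A * B = 1) : B = intInv A := by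
  calc B = (intInv A * A) * B := by rw [intInv_mul hA, one_mul]
  _ = intInv A * (A * B) := by rw [mul_assoc]
  _ = intInv A := by rw [h, mul_one]

theorem intInv_one : intInv 1 = 1 :=
  (eq_intInv_of_mul_eq_one isGL_one (one_mul 1)).symm

theorem intInv_mul_rev {A B : M2} (hA : IsGL A) (hB : IsGL B) :
    intInv (A * B) = intInv B * intInv A := by
  refine (eq_intInv_of_mul_eq_one (isGL_mul hA hB) ?_).symm
  calc A * B * (intInv B * intInv A) = A * (B * intInv B) * intInv A := by
        simp [mul_assoc]
  _ = 1 := by rw [mul_intInv hB, mul_one, mul_intInv hA]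

/-- the word with value `(phiLetter a)⁻¹`. -/
def invWord : Alph → List Alph
  | Alph.X => [Alph.X]
  | Alph.N => [Alph.N]
  | Alph.S => [Alph.X, Alph.S]
  | Alph.R => [Alph.X, Alph.R, Alph.R]

theorem phi_invWord (a : Alph) : phi (invWord a) = intInv (phiLetter a) := by
  cases a <;>
    norm_num [invWord, phi, phiLetter, intInv, Matrix.adjugate_fin_two_of,
      Matrix.det_fin_two_of, Matrix.mul_fin_two] <;>
    ext i j <;> fin_cases i <;> fin_cases j <;> norm_num

end SolAux

namespace SolAux
open Alph

/-- word for T = !![1,1;0,1] -/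
def wT : List Alph := [Alph.X, Alph.S, Alph.R]
/-- word for T⁻¹ = !![1,-1;0,1] -/
def wT' : List Alph := [Alph.X, Alph.R, Alph.R, Alph.S]

theorem phi_wT : phi wT = !![1, 1; 0, 1] := by
  norm_num [wT, phi, phiLetter, Matrix.mul_fin_two]

theorem phi_wT' : phi wT' = !![1, -1; 0, 1] := by
  norm_num [wT', phi, phiLetter, Matrix.mul_fin_two]

/-- word for T^k -/
def wTz (k : ℤ) : List Alph :=
  if 0 ≤ k then (List.replicate k.toNat wT).flatten else (List.replicate (-k).toNat wT').flatten

theorem phi_join_replicate (n : ℕ) (u : List Alph) :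
    phi (List.replicate n u).flatten = phi u ^ n := by
  induction n with
  | zero => simp [phi_nil]
  | succ n ih => rw [List.replicate_succ, List.flatten_cons, phi_append, ih, pow_succ']

theorem Tpow (k : ℕ) : (!![1, 1; 0, 1] : M2) ^ k = !![1, (k : ℤ); 0, 1] := by
  induction k with
  | zero => norm_num; ext i j; fin_cases i <;> fin_cases j <;> norm_num
  | succ k ih =>
    rw [pow_succ, ih]
    ext i j
    fin_cases i <;> fin_cases j <;> norm_num [Matrix.mul_fin_two] <;> try ring

theorem T'pow (k : ℕ) : (!![1, -1; 0, 1] : M2) ^ k = !![1, -(k : ℤ); 0, 1] := by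
  induction k with
  | zero => norm_num; ext i j; fin_cases i <;> fin_cases j <;> norm_num
  | succ k ih =>
    rw [pow_succ, ih]
    ext i j
    fin_cases i <;> fin_cases j <;> norm_num [Matrix.mul_fin_two] <;> try ring

theorem phi_wTz (k : ℤ) : phi (wTz k) = !![1, k; 0, 1] := by
  rw [wTz]
  split_ifs with h
  · rw [phi_join_replicate, phi_wT, Tpow, Int.toNat_of_nonneg h]
  · rw [phi_join_replicate, phi_wT', T'pow, Int.toNat_of_nonneg (by omega : (0:ℤ) ≤ -k), neg_neg]

end SolAux

namespace SolAux
open Alph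

theorem emod_natAbs_lt (a : ℤ) {c : ℤ} (h : c ≠ 0) : (a % c).natAbs < c.natAbs := by
  have h1 := Int.emod_nonneg a h
  rcases lt_or_gt_of_ne h with hb | hb
  · have h2 : a % c < -c := by rw [← Int.emod_neg]; exact Int.emod_lt_of_pos a (by omega)
    omega
  · have h2 := Int.emod_lt_of_pos a hb; omega

theorem int_mul_eq_one {a d : ℤ} (h : a * d = 1) : (a = 1 ∧ d = 1) ∨ (a = -1 ∧ d = -1) := by
  rcases Int.isUnit_iff.mp (IsUnit.of_mul_eq_one d h) with h1 | h1 <;>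
    subst h1 <;> omega

theorem phi_surj_aux : ∀ n (A : M2), (A 1 0).natAbs = n → IsGL A → ∃ w, phi w = A := by
  intro n
  induction n using Nat.strong_induction_on with
  | _ n ih =>
    intro A hc hA
    obtain ⟨a, b, c, d, rfl⟩ : ∃ a b c d, A = !![a, b; c, d] :=
      ⟨_, _, _, _, Matrix.eta_fin_two A⟩
    have hcc : (!![a, b; c, d] : M2) 1 0 = c := by norm_num
    rw [hcc] at hc
    have hdet : (!![a, b; c, d] : M2).det = a * d - b * c := Matrix.det_fin_two_of ..
    by_cases hc0 : c = 0
    · subst hc0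
      have had : a * d = 1 ∨ a * d = -1 := by
        rcases hA with h | h <;> rw [hdet] at h <;> [left; right] <;> omega
      have h4 : (a = 1 ∧ d = 1) ∨ (a = -1 ∧ d = -1) ∨ (a = 1 ∧ d = -1) ∨ (a = -1 ∧ d = 1) := by
        rcases had with h | h
        · rcases int_mul_eq_one h with h' | h' <;> tauto
        · rcases int_mul_eq_one (by linarith : a * (-d) = 1) with h' | h' <;>
            [right; right] <;> [skip; skip] <;> omega
      rcases h4 with ⟨rfl, rfl⟩ | ⟨rfl, rfl⟩ | ⟨rfl, rfl⟩ | ⟨rfl, rfl⟩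
      · exact ⟨wTz b, by rw [phi_wTz]⟩
      · refine ⟨[Alph.X] ++ wTz (-b), ?_⟩
        rw [phi_append, phi_singleton, phi_wTz]
        norm_num [phiLetter, Matrix.mul_fin_two]
      · refine ⟨wTz (-b) ++ [Alph.N], ?_⟩
        rw [phi_append, phi_singleton, phi_wTz]
        norm_num [phiLetter, Matrix.mul_fin_two]
      · refine ⟨[Alph.X] ++ wTz b ++ [Alph.N], ?_⟩
        rw [phi_append, phi_append, phi_singleton, phi_singleton, phi_wTz]
        norm_num [phiLetter, Matrix.mul_fin_two]
    · set q := a / c with hq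
      have hBgl : IsGL (!![-c, -d; a - q * c, b - q * d] : M2) := by
        have : (!![-c, -d; a - q * c, b - q * d] : M2).det = a * d - b * c := by
          rw [Matrix.det_fin_two_of]; ring
        rcases hA with h | h <;> rw [hdet] at h <;> [left; right] <;> rw [this] <;> omega
      have hlt : ((!![-c, -d; a - q * c, b - q * d] : M2) 1 0).natAbs < n := by
        have : (!![-c, -d; a - q * c, b - q * d] : M2) 1 0 = a % c := by
          rw [Int.emod_def, ← hq]; norm_num [mul_comm]
        rw [this, ← hc]
        exact emod_natAbs_lt a hc0
      obtain ⟨w, hw⟩ := ih _ hlt _ rfl hBgl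
      refine ⟨wTz q ++ [Alph.X, Alph.S] ++ w, ?_⟩
      rw [phi_append, phi_append, phi_wTz, hw]
      have hXS : phi [Alph.X, Alph.S] = !![0, 1; -1, 0] := by
        norm_num [phi, phiLetter, Matrix.mul_fin_two]
      rw [hXS]
      ext i j
      fin_cases i <;> fin_cases j <;>
        norm_num [Matrix.mul_fin_two] <;> ring

theorem phi_surj {A : M2} (hA : IsGL A) : ∃ w, phi w = A :=
  phi_surj_aux (A 1 0).natAbs A rfl hA

open scoped Classical in
/-- A canonical choice of a (nonempty) word for each matrix; for `A ∈ GL(2,ℤ)`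
its `phi`-value is `A`. -/
noncomputable def wordFor (A : M2) : List Alph :=
  if h : ∃ w, phi w = A then h.choose ++ [Alph.X, Alph.X] else [Alph.X, Alph.X]

theorem wordFor_ne_nil (A : M2) : wordFor A ≠ [] := by
  rw [wordFor]; split_ifs <;> simp

theorem phi_XX : phi [Alph.X, Alph.X] = 1 := by
  norm_num [phi, phiLetter, Matrix.mul_fin_two]
  ext i j; fin_cases i <;> fin_cases j <;> norm_num

theorem phi_wordFor {A : M2} (hA : IsGL A) : phi (wordFor A) = A := by
  have h : ∃ w, phi w = A := phi_surj hA
  rw [wordFor, dif_pos h, phi_append, h.choose_spec, phi_XX, mul_one]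

end SolAux

namespace SolAux

section Automata

variable {α : Type} {σ γ : Type}

theorem isRegular_empty : (⊥ : Language α).IsRegular := by
  refine ⟨Unit, inferInstance, ⟨fun _ _ => (), (), ∅⟩, ?_⟩
  ext x
  simp [DFA.mem_accepts]
  exact Set.notMem_empty x

theorem nfa_regular (N : NFA α σ) [Finite σ] : N.accepts.IsRegular := by
  haveI := Fintype.ofFinite (Set σ)
  exact ⟨Set σ, inferInstance, N.toDFA, N.toDFA_correct⟩

theorem nfaEvalFrom_mono (N : NFA α γ) (w : List α) :
    ∀ {S T : Set γ}, S ⊆ T → N.evalFrom S w ⊆ N.evalFrom T w := by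
  induction w with
  | nil => intro S T h; simpa [NFA.evalFrom] using h
  | cons a w ih =>
    intro S T h
    show N.evalFrom (N.stepSet S a) w ⊆ N.evalFrom (N.stepSet T a) w
    refine ih ?_
    intro p hp
    rw [NFA.mem_stepSet] at hp ⊢
    obtain ⟨t, ht, hpt⟩ := hp
    exact ⟨t, h ht, hpt⟩

theorem nfaEvalFrom_cons (N : NFA α γ) (S : Set γ) (a : α) (w : List α) :
    N.evalFrom S (a :: w) = N.evalFrom (N.stepSet S a) w := rfl

theorem nfaEvalFrom_append (N : NFA α γ) (S : Set γ) (u v : List α) :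
    N.evalFrom S (u ++ v) = N.evalFrom (N.evalFrom S u) v :=
  List.foldl_append

/-- NFA recognizing the reversal of a DFA language. -/
def revNFA (M : DFA α σ) : NFA α σ where
  step q a := {p | M.step p a = q}
  start := M.accept
  accept := {M.start}

theorem revNFA_evalFrom (M : DFA α σ) (x : List α) :
    ∀ (S : Set σ) (p : σ), p ∈ (revNFA M).evalFrom S x ↔ M.evalFrom p x.reverse ∈ S := by
  induction x with
  | nil => intro S p; simp [NFA.evalFrom]
  | cons a x ihx =>
    intro S p
    rw [nfaEvalFrom_cons, ihx, List.reverse_cons, M.evalFrom_append_singleton]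
    constructor
    · intro h
      rw [NFA.mem_stepSet] at h
      obtain ⟨t, ht, hpt⟩ := h
      have : M.step (M.evalFrom p x.reverse) a = t := hpt
      rwa [this]
    · intro h
      rw [NFA.mem_stepSet]
      exact ⟨M.step (M.evalFrom p x.reverse) a, h, rfl⟩

theorem isRegular_reverse {L : Language α} (h : L.IsRegular) :
    Language.IsRegular (List.reverse '' (L : Set (List α))) := by
  obtain ⟨σ', inst, M, rfl⟩ := h
  have key : (revNFA M).accepts = List.reverse '' (M.accepts : Set (List α)) := by
    ext x
    rw [NFA.mem_accepts]
    constructor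
    · intro ⟨q, hq, hmem⟩
      have hq' : q = M.start := hq
      subst hq'
      have := (revNFA_evalFrom M x _ _).mp hmem
      exact ⟨x.reverse, this, by simp⟩
    · intro ⟨y, hy, hxy⟩
      refine ⟨M.start, rfl, ?_⟩
      rw [revNFA_evalFrom M x]
      subst hxy
      rw [List.reverse_reverse]; exact hy
  rw [← key]
  exact nfa_regular _

section GSM

variable (M : DFA α σ) (out : σ → α → List α) (fin : σ → List α)

/-- output chunks of a GSM run (without final output). -/
def gsmChunks : σ → List α → List α
  | _, [] => []
  | q, a :: w => out q a ++ gsmChunks (M.step q a) w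

/-- the full GSM transduction, with final output. -/
def gsmTr (q : σ) (w : List α) : List α := gsmChunks M out q w ++ fin (M.evalFrom q w)

theorem gsmChunks_snoc (w : List α) : ∀ (q : σ) (a : α),
    gsmChunks M out q (w ++ [a]) = gsmChunks M out q w ++ out (M.evalFrom q w) a := by
  induction w with
  | nil => intro q a; simp [gsmChunks]
  | cons x w ih =>
    intro q a
    show out q x ++ gsmChunks M out (M.step q x) (w ++ [a]) = _
    rw [ih]
    simp [gsmChunks, DFA.evalFrom]

variable (B : ℕ)

/-- states for the GSM-image NFA: DFA state, pending output, finished flag. -/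
abbrev GsmSt := σ × {l : List α // l.length ≤ B} × Bool

/-- NFA recognizing the image of a regular language under a GSM transduction. -/
def gsmNFA : NFA α (GsmSt (σ := σ) (α := α) B) where
  step p x := {p' |
    (p.2.1.val = x :: p'.2.1.val ∧ p'.1 = p.1 ∧ p'.2.2 = p.2.2) ∨
    (p.2.1.val = [] ∧ p.2.2 = false ∧ p'.2.2 = false ∧
      ∃ a, out p.1 a = x :: p'.2.1.val ∧ p'.1 = M.step p.1 a) ∨
    (p.2.1.val = [] ∧ p.2.2 = false ∧ p'.2.2 = true ∧ p.1 ∈ M.accept ∧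
      fin p.1 = x :: p'.2.1.val ∧ p'.1 = p.1)}
  start := {p | p.1 = M.start ∧ p.2.1.val = [] ∧ p.2.2 = false}
  accept := {p | p.2.1.val = [] ∧ p.2.2 = true}

variable {M out fin B}

theorem gsm_consume : ∀ (s : List α) (rest : List α) (h1 : (s ++ rest).length ≤ B)
    (h2 : rest.length ≤ B) (q : σ) (b : Bool),
    (⟨q, ⟨rest, h2⟩, b⟩ : GsmSt B) ∈
      (gsmNFA M out fin B).evalFrom {(⟨q, ⟨s ++ rest, h1⟩, b⟩ : GsmSt B)} s := by
  intro s
  induction s with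
  | nil => intro rest h1 h2 q b; simp [NFA.evalFrom]
  | cons x s ih =>
    intro rest h1 h2 q b
    have h1' : (s ++ rest).length ≤ B := by simp at h1 ⊢; omega
    rw [nfaEvalFrom_cons]
    refine nfaEvalFrom_mono _ _ ?_ (ih rest h1' h2 q b)
    intro p hp
    rw [Set.mem_singleton_iff] at hp
    subst hp
    rw [NFA.mem_stepSet]
    refine ⟨_, rfl, ?_⟩
    left
    exact ⟨rfl, rfl, rfl⟩

theorem gsm_forward (hB1 : ∀ q a, (out q a).length ≤ B) (hout : ∀ q a, out q a ≠ []) :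
    ∀ (w : List α) (q : σ),
    (⟨M.evalFrom q w, ⟨[], by simp⟩, false⟩ : GsmSt B) ∈
      (gsmNFA M out fin B).evalFrom {(⟨q, ⟨[], by simp⟩, false⟩ : GsmSt B)}
        (gsmChunks M out q w) := by
  intro w
  induction w with
  | nil => intro q; simp [gsmChunks, NFA.evalFrom, DFA.evalFrom]
  | cons a w ih =>
    intro q
    show _ ∈ (gsmNFA M out fin B).evalFrom _ (out q a ++ gsmChunks M out (M.step q a) w)
    rw [nfaEvalFrom_append]
    have hchunk : (⟨M.step q a, ⟨[], by simp⟩, false⟩ : GsmSt B) ∈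
        (gsmNFA M out fin B).evalFrom {(⟨q, ⟨[], by simp⟩, false⟩ : GsmSt B)} (out q a) := by
      rcases hu : out q a with _ | ⟨x, s⟩
      · exact absurd hu (hout q a)
      · have hs : s.length ≤ B := by
          have := hB1 q a; rw [hu] at this; simp at this; omega
        have step1 : (⟨M.step q a, ⟨s, hs⟩, false⟩ : GsmSt B) ∈
            (gsmNFA M out fin B).stepSet {(⟨q, ⟨[], by simp⟩, false⟩ : GsmSt B)} x := by
          rw [NFA.mem_stepSet]
          refine ⟨_, rfl, ?_⟩
          right; left
          exact ⟨rfl, rfl, rfl, a, by rw [hu], rfl⟩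
        rw [nfaEvalFrom_cons]
        have hc : (⟨M.step q a, ⟨[], by simp⟩, false⟩ : GsmSt B) ∈
            (gsmNFA M out fin B).evalFrom {(⟨M.step q a, ⟨s, hs⟩, false⟩ : GsmSt B)} s := by
          have := gsm_consume (M := M) (out := out) (fin := fin) s [] (by simpa using hs)
            (by simp) (M.step q a) false
          simpa using this
        exact nfaEvalFrom_mono _ _ (Set.singleton_subset_iff.mpr step1) hc
    have := nfaEvalFrom_mono (gsmNFA M out fin B) (gsmChunks M out (M.step q a) w)
      (Set.singleton_subset_iff.mpr hchunk)
    refine this ?_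
    have := ih (M.step q a)
    simpa [DFA.evalFrom] using this

end GSM

end Automata

end SolAux

namespace SolAux

section GSM2

variable {α : Type} {σ : Type} {M : DFA α σ} {out : σ → α → List α} {fin : σ → List α} {B : ℕ}

theorem gsm_backward :
    ∀ (x : List α) (p : GsmSt (σ := σ) (α := α) B),
      p ∈ (gsmNFA M out fin B).evalFrom (gsmNFA M out fin B).start x →
    (p.2.2 = false → ∃ w, M.evalFrom M.start w = p.1 ∧
        x ++ p.2.1.val = gsmChunks M out M.start w) ∧
    (p.2.2 = true → ∃ w, M.evalFrom M.start w ∈ M.accept ∧ M.evalFrom M.start w = p.1 ∧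
        x ++ p.2.1.val = gsmChunks M out M.start w ++ fin p.1) := by
  intro x
  induction x using List.reverseRecOn with
  | nil =>
    intro p hp
    obtain ⟨h1, h2, h3⟩ := hp
    constructor
    · intro _
      exact ⟨[], by simp [DFA.evalFrom, h1.symm], by simp [gsmChunks, h2]⟩
    · intro hb
      rw [h3] at hb
      exact absurd hb (by simp)
  | append_singleton y c ih =>
    intro p hp
    rw [show (gsmNFA M out fin B).evalFrom (gsmNFA M out fin B).start (y ++ [c]) =
      (gsmNFA M out fin B).stepSet ((gsmNFA M out fin B).evalFrom (gsmNFA M out fin B).start y) c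
      from by rw [nfaEvalFrom_append]; rfl, NFA.mem_stepSet] at hp
    obtain ⟨p₀, hp₀, hstep⟩ := hp
    rcases hstep with ⟨hval, hq, hb⟩ | ⟨hval0, hb0, hbf', a, ha, hq⟩ |
      ⟨hval0, hb0, hbt', hacc, hfq, hq⟩
    · constructor
      · intro hbf
        obtain ⟨w, hw1, hw2⟩ := (ih p₀ hp₀).1 (by rw [← hb]; exact hbf)
        refine ⟨w, by rw [hq]; exact hw1, ?_⟩
        rw [← hw2, hval]
        simp
      · intro hbt
        obtain ⟨w, hw0, hw1, hw2⟩ := (ih p₀ hp₀).2 (by rw [← hb]; exact hbt)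
        refine ⟨w, hw0, by rw [hq]; exact hw1, ?_⟩
        rw [hq, ← hw2, hval]
        simp
    · constructor
      · intro _
        obtain ⟨w, hw1, hw2⟩ := (ih p₀ hp₀).1 hb0
        rw [hval0, List.append_nil] at hw2
        refine ⟨w ++ [a], ?_, ?_⟩
        · rw [DFA.evalFrom_append_singleton, hw1, hq]
        · rw [gsmChunks_snoc, ← hw2, hw1, ha]
          simp
      · intro hbt
        rw [hbt] at hbf'
        exact absurd hbf'.symm (by simp)
    · constructor
      · intro hbf
        rw [hbf] at hbt'
        exact absurd hbt'.symm (by simp)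
      · intro _
        obtain ⟨w, hw1, hw2⟩ := (ih p₀ hp₀).1 hb0
        rw [hval0, List.append_nil] at hw2
        refine ⟨w, by rw [hw1]; exact hacc, by rw [hq]; exact hw1, ?_⟩
        rw [← hw2, hq, hfq]
        simp

theorem gsm_accepts (hB1 : ∀ q a, (out q a).length ≤ B) (hB2 : ∀ q, (fin q).length ≤ B)
    (hout : ∀ q a, out q a ≠ []) (hfin : ∀ q, fin q ≠ []) :
    (gsmNFA M out fin B).accepts =
      (fun w => gsmTr M out fin M.start w) '' (M.accepts : Set (List α)) := by
  ext x
  constructor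
  · intro hx
    rw [NFA.mem_accepts] at hx
    obtain ⟨p, hpacc, hpev⟩ := hx
    obtain ⟨hv, hb⟩ := hpacc
    obtain ⟨w, hw0, hw1, hw2⟩ := (gsm_backward x p hpev).2 hb
    refine ⟨w, hw0, ?_⟩
    rw [hv, List.append_nil] at hw2
    simp only [gsmTr]; rw [hw1, ← hw2]
  · rintro ⟨w, hw, rfl⟩
    rw [NFA.mem_accepts]
    refine ⟨⟨M.evalFrom M.start w, ⟨[], by simp⟩, true⟩, ⟨rfl, rfl⟩, ?_⟩
    simp only [gsmTr]; rw [nfaEvalFrom_append]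
    set qf := M.evalFrom M.start w with hqf
    have hstart : (⟨M.start, ⟨[], by simp⟩, false⟩ : GsmSt B) ∈ (gsmNFA M out fin B).start :=
      ⟨rfl, rfl, rfl⟩
    have hmid : (⟨qf, ⟨[], by simp⟩, false⟩ : GsmSt B) ∈
        (gsmNFA M out fin B).evalFrom (gsmNFA M out fin B).start (gsmChunks M out M.start w) :=
      nfaEvalFrom_mono _ _ (Set.singleton_subset_iff.mpr hstart) (gsm_forward hB1 hout w M.start)
    refine nfaEvalFrom_mono _ _ (Set.singleton_subset_iff.mpr hmid) ?_
    rcases hu : fin qf with _ | ⟨x0, s⟩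
    · exact absurd hu (hfin qf)
    · have hs : s.length ≤ B := by
        have := hB2 qf; rw [hu] at this; simp at this; omega
      have step1 : (⟨qf, ⟨s, hs⟩, true⟩ : GsmSt B) ∈
          (gsmNFA M out fin B).stepSet {(⟨qf, ⟨[], by simp⟩, false⟩ : GsmSt B)} x0 := by
        rw [NFA.mem_stepSet]
        refine ⟨_, rfl, ?_⟩
        right; right
        exact ⟨rfl, rfl, rfl, hw, by rw [hu], rfl⟩
      rw [nfaEvalFrom_cons]
      have hc : (⟨qf, ⟨[], by simp⟩, true⟩ : GsmSt B) ∈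
          (gsmNFA M out fin B).evalFrom {(⟨qf, ⟨s, hs⟩, true⟩ : GsmSt B)} s := by
        have := gsm_consume (M := M) (out := out) (fin := fin) s [] (by simpa using hs)
          (by simp) qf true
        simpa using this
      exact nfaEvalFrom_mono _ _ (Set.singleton_subset_iff.mpr step1) hc

theorem gsm_regular [Fintype α] [Fintype σ] (M : DFA α σ) (out : σ → α → List α)
    (fin : σ → List α) (hout : ∀ q a, out q a ≠ []) (hfin : ∀ q, fin q ≠ []) :
    Language.IsRegular ((fun w => gsmTr M out fin M.start w) '' (M.accepts : Set (List α))) := by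
  classical
  set B := (Finset.univ.sup fun p : σ × α => (out p.1 p.2).length) ⊔
    (Finset.univ.sup fun q : σ => (fin q).length) with hB
  have hB1 : ∀ q a, (out q a).length ≤ B := fun q a =>
    le_sup_of_le_left (Finset.le_sup (f := fun p : σ × α => (out p.1 p.2).length) (Finset.mem_univ (q, a)))
  have hB2 : ∀ q, (fin q).length ≤ B := fun q =>
    le_sup_of_le_right (Finset.le_sup (f := fun q : σ => (fin q).length) (Finset.mem_univ q))
  haveI : Finite {l : List α // l.length ≤ B} := (List.finite_length_le α B).to_subtype
  rw [← gsm_accepts hB1 hB2 hout hfin]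
  exact nfa_regular _

end GSM2

end SolAux

namespace SolAux

open Matrix

/-- Cast to rational matrices. -/
def Th : M2 →+* Matrix (Fin 2) (Fin 2) ℚ := (Int.castRingHom ℚ).mapMatrix

theorem Th_apply (A : M2) (i j : Fin 2) : Th A i j = (A i j : ℚ) := rfl

theorem Th_injective : Function.Injective Th := by
  intro A B h
  ext i j
  have := congrArg (fun M => M i j) h
  simpa [Th_apply] using this

theorem Th_smul (d : ℤ) (A : M2) : Th (d • A) = (d : ℚ) • Th A := by
  ext i j
  rw [Th_apply, Matrix.smul_apply, Matrix.smul_apply, smul_eq_mul, smul_eq_mul]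
  push_cast
  rfl

theorem Th_adjugate (A : M2) : Th A.adjugate = (Th A).adjugate :=
  (Int.castRingHom ℚ).map_adjugate A

theorem detTh (A : M2) : (Th A).det = (A.det : ℚ) := (RingHom.map_det _ _).symm

/-- Cast to matrices mod m. -/
def Ph (m : ℕ) : M2 →+* Matrix (Fin 2) (Fin 2) (ZMod m) := (Int.castRingHom (ZMod m)).mapMatrix

theorem Ph_apply (m : ℕ) (A : M2) (i j : Fin 2) : Ph m A i j = ((A i j : ℤ) : ZMod m) := rfl

theorem Ph_smul (m : ℕ) (d : ℤ) (A : M2) : Ph m (d • A) = ((d : ℤ) : ZMod m) • Ph m A := by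
  ext i j
  rw [Ph_apply, Matrix.smul_apply, Matrix.smul_apply, smul_eq_mul, smul_eq_mul]
  push_cast
  rfl

section WithM

variable (M₁ : M2)

/-- Conjugation `C ↦ M₁⁻¹ C M₁` implemented with integer division. -/
noncomputable def psim (C : M2) : M2 := Matrix.of fun i j => (M₁.adjugate * C * M₁) i j / M₁.det

/-- The integrality domain of `psim`. -/
def DomD (C : M2) : Prop := ∀ i j, M₁.det ∣ (M₁.adjugate * C * M₁) i j

theorem domd_iff (C : M2) :
    DomD M₁ C ↔ Ph M₁.det.natAbs M₁.adjugate * Ph M₁.det.natAbs C * Ph M₁.det.natAbs M₁ = 0 := by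
  rw [← _root_.map_mul, ← _root_.map_mul]
  constructor
  · intro h
    ext i j
    rw [Ph_apply]
    simp only [Matrix.zero_apply]
    rw [ZMod.intCast_zmod_eq_zero_iff_dvd, Int.natAbs_dvd]
    exact h i j
  · intro h i j
    have := congrArg (fun M => M i j) h
    simp only [Matrix.zero_apply] at this
    rw [Ph_apply] at this
    rw [← Int.natAbs_dvd, ← ZMod.intCast_zmod_eq_zero_iff_dvd]
    exact this

theorem det_cast_zero : ((M₁.det : ℤ) : ZMod M₁.det.natAbs) = 0 := by
  rw [ZMod.intCast_zmod_eq_zero_iff_dvd, Int.natAbs_dvd]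

theorem detTh_unit (h₁ : M₁.det ≠ 0) : IsUnit (Th M₁).det := by
  rw [detTh, isUnit_iff_ne_zero]
  exact_mod_cast h₁

theorem Th_inv : (Th M₁)⁻¹ = ((M₁.det : ℚ))⁻¹ • Th M₁.adjugate := by
  rw [Matrix.inv_def, Ring.inverse_eq_inv', detTh, Th_adjugate]

theorem psi_spec (h₁ : M₁.det ≠ 0) {C : M2} (hC : DomD M₁ C) :
    Th (psim M₁ C) = (Th M₁)⁻¹ * Th C * Th M₁ := by
  have hdq : ((M₁.det : ℚ)) ≠ 0 := by exact_mod_cast h₁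
  have step1 : Th (psim M₁ C) = ((M₁.det : ℚ))⁻¹ • Th (M₁.adjugate * C * M₁) := by
    ext i j
    obtain ⟨k, hk⟩ := hC i j
    have hpsim : psim M₁ C i j = (M₁.adjugate * C * M₁) i j / M₁.det := rfl
    rw [Th_apply, hpsim, hk, Int.mul_ediv_cancel_left _ h₁, Matrix.smul_apply, Th_apply, hk]
    push_cast
    rw [smul_eq_mul, inv_mul_cancel_left₀ (by push_cast at hdq; exact hdq)]
  rw [step1, _root_.map_mul, _root_.map_mul, Th_inv M₁]
  rw [Matrix.smul_mul, Matrix.smul_mul]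

theorem psi_isGL (h₁ : M₁.det ≠ 0) {C : M2} (hC : DomD M₁ C) (hgl : IsGL C) :
    IsGL (psim M₁ C) := by
  have h1 : Th (psim M₁ C) = (Th M₁)⁻¹ * Th C * Th M₁ := psi_spec M₁ h₁ hC
  have hdq : ((M₁.det : ℚ)) ≠ 0 := by exact_mod_cast h₁
  have h2 : ((psim M₁ C).det : ℚ) = (C.det : ℚ) := by
    rw [← detTh, ← detTh, h1, Matrix.det_mul, Matrix.det_mul, Matrix.det_nonsing_inv,
      Ring.inverse_eq_inv', detTh M₁]
    field_simp
  have h3 : (psim M₁ C).det = C.det := by exact_mod_cast h2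
  rcases hgl with h | h
  · exact Or.inl (by rw [h3]; exact h)
  · exact Or.inr (by rw [h3]; exact h)

end WithM

section Rep

open scoped Classical in
/-- Coset representatives: a matrix in `GL(2,ℤ)` whose reduction mod `m` is `q`
(when one exists), with `rep m 1 = 1`. -/
noncomputable def rep (m : ℕ) (q : Matrix (Fin 2) (Fin 2) (ZMod m)) : M2 :=
  if q = 1 then 1 else if h : ∃ w : List Alph, Ph m (phi w) = q then phi h.choose else 1

theorem rep_one (m : ℕ) : rep m 1 = 1 := if_pos rfl

theorem isGL_rep (m : ℕ) (q : Matrix (Fin 2) (Fin 2) (ZMod m)) : IsGL (rep m q) := by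
  rw [rep]
  split_ifs
  exacts [isGL_one, isGL_phi _, isGL_one]

theorem Ph_rep (m : ℕ) {q : Matrix (Fin 2) (Fin 2) (ZMod m)}
    (h : ∃ w : List Alph, Ph m (phi w) = q) : Ph m (rep m q) = q := by
  rw [rep]
  by_cases h1 : q = 1
  · rw [if_pos h1, _root_.map_one, h1]
  · rw [if_neg h1, dif_pos h]
    exact h.choose_spec

/-- Schreier generators. -/
noncomputable def sgen (m : ℕ) (q : Matrix (Fin 2) (Fin 2) (ZMod m)) (a : Alph) : M2 :=
  rep m q * phiLetter a * intInv (rep m (q * Ph m (phiLetter a)))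

theorem isGL_sgen (m : ℕ) (q : Matrix (Fin 2) (Fin 2) (ZMod m)) (a : Alph) :
    IsGL (sgen m q a) :=
  isGL_mul (isGL_mul (isGL_rep m q) (det_phiLetter a)) (isGL_intInv (isGL_rep m _))

theorem Ph_sgen (m : ℕ) {q : Matrix (Fin 2) (Fin 2) (ZMod m)}
    (h : ∃ w : List Alph, Ph m (phi w) = q) (a : Alph) : Ph m (sgen m q a) = 1 := by
  obtain ⟨w, hw⟩ := h
  have hq' : ∃ w' : List Alph, Ph m (phi w') = q * Ph m (phiLetter a) :=
    ⟨w ++ [a], by rw [phi_append, _root_.map_mul, hw, phi_singleton]⟩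
  have h1 : Ph m (rep m (q * Ph m (phiLetter a))) = q * Ph m (phiLetter a) := Ph_rep m hq'
  have h2 : Ph m (rep m (q * Ph m (phiLetter a))) *
      Ph m (intInv (rep m (q * Ph m (phiLetter a)))) = 1 := by
    rw [← _root_.map_mul, mul_intInv (isGL_rep m _), _root_.map_one]
  rw [h1] at h2
  rw [sgen, _root_.map_mul, _root_.map_mul, Ph_rep m ⟨w, hw⟩]
  exact h2

theorem domd_sgen (M₁ : M2) {q : Matrix (Fin 2) (Fin 2) (ZMod M₁.det.natAbs)}
    (h : ∃ w : List Alph, Ph M₁.det.natAbs (phi w) = q) (a : Alph) :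
    DomD M₁ (sgen M₁.det.natAbs q a) := by
  rw [domd_iff, Ph_sgen _ h a, mul_one, ← _root_.map_mul]
  have : M₁.adjugate * M₁ = M₁.det • (1 : M2) := Matrix.adjugate_mul M₁
  rw [this, Ph_smul, det_cast_zero, zero_smul]

theorem domd_of_Ph_eq (M₁ : M2) {C C' : M2}
    (h : Ph M₁.det.natAbs C = Ph M₁.det.natAbs C') (hC : DomD M₁ C) : DomD M₁ C' := by
  rw [domd_iff] at hC ⊢
  rw [← h]
  exact hC

end Rep

end SolAux

namespace SolAux

open Matrix

section WithM2

variable (M₁ : M2)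

theorem Th_left_cancel (h₁ : M₁.det ≠ 0) {X Y : Matrix (Fin 2) (Fin 2) ℚ}
    (h : Th M₁ * X = Th M₁ * Y) : X = Y := by
  have h2 := congrArg (fun Z => (Th M₁)⁻¹ * Z) h
  simp only [← mul_assoc] at h2
  rwa [Matrix.nonsing_inv_mul _ (detTh_unit M₁ h₁), one_mul, one_mul] at h2

theorem psi_spec' (h₁ : M₁.det ≠ 0) {C : M2} (hC : DomD M₁ C) :
    Th M₁ * Th (psim M₁ C) = Th C * Th M₁ := by
  rw [psi_spec M₁ h₁ hC, ← mul_assoc, ← mul_assoc,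
    Matrix.mul_nonsing_inv _ (detTh_unit M₁ h₁), one_mul]

theorem psim_comm (h₁ : M₁.det ≠ 0) {C : M2} (hC : DomD M₁ C) : M₁ * psim M₁ C = C * M₁ := by
  apply Th_injective
  rw [_root_.map_mul, _root_.map_mul]
  exact psi_spec' M₁ h₁ hC

theorem M2_left_cancel (h₁ : M₁.det ≠ 0) {X Y : M2} (h : M₁ * X = M₁ * Y) : X = Y := by
  apply Th_injective
  apply Th_left_cancel M₁ h₁
  rw [← _root_.map_mul, ← _root_.map_mul, h]

theorem adj_eq_of_comm {C Y : M2} (hkey : C * M₁ = M₁ * Y) :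
    M₁.adjugate * C * M₁ = M₁.det • Y := by
  rw [mul_assoc, hkey, ← mul_assoc, Matrix.adjugate_mul, Matrix.smul_mul, one_mul]

theorem domd_of_comm {C Y : M2} (hkey : C * M₁ = M₁ * Y) : DomD M₁ C := by
  intro i j
  rw [adj_eq_of_comm M₁ hkey, Matrix.smul_apply, smul_eq_mul]
  exact ⟨Y i j, rfl⟩

theorem psim_of_comm (h₁ : M₁.det ≠ 0) {C Y : M2} (hkey : C * M₁ = M₁ * Y) : psim M₁ C = Y := by
  ext i j
  have hpsim : psim M₁ C i j = (M₁.adjugate * C * M₁) i j / M₁.det := rfl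
  rw [hpsim, adj_eq_of_comm M₁ hkey, Matrix.smul_apply, smul_eq_mul,
    Int.mul_ediv_cancel_left _ h₁]

end WithM2

end SolAux

namespace SolAux

def prodDFA {α σ τ : Type} (M : DFA α σ) (N : DFA α τ) (acc : Set (σ × τ)) : DFA α (σ × τ) where
  step p a := (M.step p.1 a, N.step p.2 a)
  start := (M.start, N.start)
  accept := acc

theorem prodDFA_evalFrom {α σ τ : Type} (M : DFA α σ) (N : DFA α τ) (acc : Set (σ × τ))
    (w : List α) : ∀ p, (prodDFA M N acc).evalFrom p w = (M.evalFrom p.1 w, N.evalFrom p.2 w) := by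
  induction w with
  | nil => intro p; rfl
  | cons a w ih => intro p; exact ih _

def modDFA (m : ℕ) (P : Set (Matrix (Fin 2) (Fin 2) (ZMod m))) :
    DFA Alph (Matrix (Fin 2) (Fin 2) (ZMod m)) where
  step q a := q * Ph m (phiLetter a)
  start := 1
  accept := P

theorem modDFA_evalFrom (m : ℕ) (P : Set (Matrix (Fin 2) (Fin 2) (ZMod m))) (w : List Alph) :
    ∀ q, (modDFA m P).evalFrom q w = q * Ph m (phi w) := by
  induction w with
  | nil => intro q; rw [phi_nil, _root_.map_one, mul_one]; rfl
  | cons a w ih =>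
    intro q
    show (modDFA m P).evalFrom (q * Ph m (phiLetter a)) w = _
    rw [ih, phi_cons, _root_.map_mul, mul_assoc]

theorem invWord_rev_ne_nil (a : Alph) : (invWord a).reverse ≠ [] := by
  cases a <;> simp [invWord]

end SolAux
namespace SolAux

theorem gsmTr_cons {α σ : Type} (M : DFA α σ) (out : σ → α → List α) (fin : σ → List α)
    (q : σ) (a : α) (w : List α) :
    gsmTr M out fin q (a :: w) = out q a ++ gsmTr M out fin (M.step q a) w := by
  show (out q a ++ gsmChunks M out (M.step q a) w) ++ fin (M.evalFrom (M.step q a) w) = _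
  rw [List.append_assoc]
  rfl

theorem gsmTr_concat {σ' : Type} (M' : DFA Alph σ') (v : List Alph) :
    ∀ (w : List Alph) (q : σ'), gsmTr M' (fun _ a => [a]) (fun _ => v) q w = w ++ v := by
  intro w
  induction w with
  | nil => intro q; rfl
  | cons a w ih =>
    intro q
    rw [gsmTr_cons, ih]
    rfl

end SolAux

open SolAux in
/-- For nonsingular `M₁, M₂` and a regular subset `𝒮₁ ⊆ GL(2,ℤ)`, the set of `A ∈ GL(2,ℤ)`
such that `A₁ · M₁ · A = M₂` for some `A₁ ∈ 𝒮₁` is a regular subset of GL(2,ℤ). -/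
theorem solutions_regular_one_matrix (M₁ M₂ : M2) (h₁ : M₁.det ≠ 0) (h₂ : M₂.det ≠ 0)
    (S₁ : Set M2) (hS₁ : RegularSubset S₁) :
    RegularSubset {A : M2 | IsGL A ∧ ∃ A₁ ∈ S₁, A₁ * M₁ * A = M₂} := by
  classical
  obtain ⟨L, hLreg, hphiL⟩ := hS₁
  rcases Set.eq_empty_or_nonempty {A : M2 | IsGL A ∧ ∃ A₁ ∈ S₁, A₁ * M₁ * A = M₂} with
    hemp | ⟨A₀, hA₀⟩
  · refine ⟨⊥, isRegular_empty, ?_⟩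
    rw [hemp]
    exact Set.image_empty phi
  obtain ⟨hA₀gl, A₁₀, hA₁₀S, hA₀eq⟩ := hA₀
  have hS₁GL : ∀ A ∈ S₁, IsGL A := by
    intro A hA
    rw [← hphiL] at hA
    obtain ⟨w, _, rfl⟩ := hA
    exact isGL_phi w
  have hA₁₀gl : IsGL A₁₀ := hS₁GL _ hA₁₀S
  obtain ⟨w₀, hw₀L, hw₀⟩ : ∃ w ∈ L, phi w = A₁₀ := by
    have : A₁₀ ∈ phi '' L := by rw [hphiL]; exact hA₁₀S
    obtain ⟨w, hw, hw'⟩ := this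
    exact ⟨w, hw, hw'⟩
  -- Stage A : inversion
  obtain ⟨σ₁, inst₁, MA, hMA⟩ := hLreg
  haveI := inst₁
  set out1 : σ₁ → Alph → List Alph := fun _ a => (invWord a).reverse with hout1
  set fin1 : σ₁ → List Alph := fun _ => [Alph.X, Alph.X] with hfin1
  have hrev1 : ∀ (w : List Alph) (q : σ₁),
      phi ((gsmChunks MA out1 q w).reverse) = intInv (phi w) := by
    intro w
    induction w with
    | nil =>
      intro q
      rw [show gsmChunks MA out1 q [] = [] from rfl, List.reverse_nil, phi_nil, intInv_one]
    | cons a w ih =>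
      intro q
      rw [show gsmChunks MA out1 q (a :: w) =
        (invWord a).reverse ++ gsmChunks MA out1 (MA.step q a) w from rfl]
      rw [List.reverse_append, List.reverse_reverse, phi_append, ih, phi_invWord, phi_cons,
        intInv_mul_rev (det_phiLetter a) (isGL_phi w)]
  have htr1 : ∀ w : List Alph,
      phi ((gsmTr MA out1 fin1 MA.start w).reverse) = intInv (phi w) := by
    intro w
    rw [show gsmTr MA out1 fin1 MA.start w =
      gsmChunks MA out1 MA.start w ++ [Alph.X, Alph.X] from rfl]
    rw [List.reverse_append, show ([Alph.X, Alph.X] : List Alph).reverse = [Alph.X, Alph.X]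
      from rfl, phi_append, phi_XX, one_mul, hrev1]
  set L₂ : Language Alph :=
    List.reverse '' ((fun w => gsmTr MA out1 fin1 MA.start w) '' (MA.accepts : Set (List Alph)))
    with hL₂def
  have hL₂reg : L₂.IsRegular :=
    isRegular_reverse (gsm_regular MA out1 fin1 (fun _ a => invWord_rev_ne_nil a)
      (fun _ => by simp [hfin1]))
  have hphiL₂ : phi '' (L₂ : Set (List Alph)) = intInv '' S₁ := by
    rw [hL₂def, Set.image_image, Set.image_image (s := MA.accepts), ← hphiL, ← hMA,
      Set.image_image (s := MA.accepts)]
    exact Set.image_congr fun w _ => htr1 w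
  -- Stage B : right multiplication by A₁₀
  obtain ⟨σ₂, inst₂, MB, hMB⟩ := hL₂reg
  haveI := inst₂
  set v₂ : List Alph := w₀ ++ [Alph.X, Alph.X] with hv₂
  set L₃ : Language Alph :=
    (fun w => gsmTr MB (fun _ a => [a]) (fun _ => v₂) MB.start w) '' (MB.accepts : Set (List Alph))
    with hL₃def
  have hL₃reg : L₃.IsRegular :=
    gsm_regular MB _ _ (fun _ a => by simp) (fun _ => by simp [hv₂])
  set S₃ : Set M2 := (fun B => B * A₁₀) '' (intInv '' S₁) with hS₃def
  have hphiL₃ : phi '' (L₃ : Set (List Alph)) = S₃ := by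
    rw [hL₃def, Set.image_image (s := MB.accepts), hS₃def, ← hphiL₂, ← hMB,
      Set.image_image (s := MB.accepts)]
    refine Set.image_congr fun w _ => ?_
    rw [gsmTr_concat, phi_append, hv₂, phi_append, hw₀, phi_XX, mul_one]
  -- Stage C : Schreier conjugation
  obtain ⟨σ₃, inst₃, MC, hMC⟩ := hL₃reg
  haveI := inst₃
  set m := M₁.det.natAbs with hm
  haveI : NeZero m := ⟨Int.natAbs_ne_zero.mpr h₁⟩
  set Pdom : Set (Matrix (Fin 2) (Fin 2) (ZMod m)) :=
    {X | Ph m M₁.adjugate * X * Ph m M₁ = 0} with hPdom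
  set Mp := prodDFA MC (modDFA m Pdom) {p | p.1 ∈ MC.accept ∧ p.2 ∈ Pdom} with hMpdef
  have heval : ∀ w : List Alph,
      Mp.evalFrom Mp.start w = (MC.evalFrom MC.start w, Ph m (phi w)) := by
    intro w
    have h' : Mp.evalFrom Mp.start w =
        (MC.evalFrom MC.start w, (modDFA m Pdom).evalFrom 1 w) :=
      prodDFA_evalFrom _ _ _ w _
    rw [h', modDFA_evalFrom, one_mul]
  have hMpacc : ∀ w : List Alph,
      w ∈ Mp.accepts ↔ (w ∈ (L₃ : Set (List Alph)) ∧ DomD M₁ (phi w)) := by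
    intro w
    rw [DFA.mem_accepts, show Mp.eval w = Mp.evalFrom Mp.start w from rfl, heval]
    constructor
    · intro ⟨hl, hr⟩
      refine ⟨?_, ?_⟩
      · rw [← hMC]; exact hl
      · rw [domd_iff]; exact hr
    · intro ⟨hl, hr⟩
      refine ⟨?_, ?_⟩
      · rw [← hMC] at hl; exact hl
      · rw [domd_iff] at hr; exact hr
  set out3 : (σ₃ × Matrix (Fin 2) (Fin 2) (ZMod m)) → Alph → List Alph :=
    fun p a => wordFor (psim M₁ (sgen m p.2 a)) with hout3
  set fin3 : (σ₃ × Matrix (Fin 2) (Fin 2) (ZMod m)) → List Alph :=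
    fun p => wordFor (psim M₁ (rep m p.2)) with hfin3
  have hgl_psim_sgen : ∀ (u : List Alph) (a : Alph), IsGL (psim M₁ (sgen m (Ph m (phi u)) a)) :=
    fun u a => psi_isGL M₁ h₁ (domd_sgen M₁ ⟨u, rfl⟩ a) (isGL_sgen m _ a)
  have hc1 : ∀ (w : List Alph) (p : σ₃) (u : List Alph),
      M₁ * phi (gsmChunks Mp out3 (p, Ph m (phi u)) w) =
        rep m (Ph m (phi u)) * phi w * intInv (rep m (Ph m (phi u) * Ph m (phi w))) * M₁ := by
    intro w
    induction w with
    | nil =>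
      intro p u
      rw [show gsmChunks Mp out3 (p, Ph m (phi u)) [] = [] from rfl]
      simp only [phi_nil, _root_.map_one, mul_one]
      rw [mul_intInv (isGL_rep m _), one_mul]
    | cons a w ih =>
      intro p u
      have hqa : Ph m (phi u) * Ph m (phiLetter a) = Ph m (phi (u ++ [a])) := by
        rw [phi_append, _root_.map_mul, phi_singleton]
      have hstep : gsmChunks Mp out3 (p, Ph m (phi u)) (a :: w) =
          out3 (p, Ph m (phi u)) a ++
            gsmChunks Mp out3 (MC.step p a, Ph m (phi u) * Ph m (phiLetter a)) w := rfl
      rw [hstep, phi_append, ← mul_assoc]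
      have hfirst : M₁ * phi (out3 (p, Ph m (phi u)) a) = sgen m (Ph m (phi u)) a * M₁ := by
        rw [hout3]
        show M₁ * phi (wordFor (psim M₁ (sgen m (Ph m (phi u)) a))) = _
        rw [phi_wordFor (hgl_psim_sgen u a)]
        exact psim_comm M₁ h₁ (domd_sgen M₁ ⟨u, rfl⟩ a)
      rw [hfirst, mul_assoc,
        show (MC.step p a, Ph m (phi u) * Ph m (phiLetter a)) =
          (MC.step p a, Ph m (phi (u ++ [a]))) from by rw [hqa],
        ih (MC.step p a) (u ++ [a])]
      have hsr : sgen m (Ph m (phi u)) a * rep m (Ph m (phi (u ++ [a]))) =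
          rep m (Ph m (phi u)) * phiLetter a := by
        rw [sgen, hqa, mul_assoc, intInv_mul (isGL_rep m _), mul_one]
      have harg : Ph m (phi (u ++ [a])) * Ph m (phi w) = Ph m (phi u) * Ph m (phi (a :: w)) := by
        rw [← hqa, mul_assoc, ← _root_.map_mul, ← phi_cons]
      simp only [← mul_assoc]
      rw [hsr, mul_assoc (rep m (Ph m (phi u))) (phiLetter a) (phi w), ← phi_cons, harg]
  have htr3 : ∀ w ∈ Mp.accepts, phi (gsmTr Mp out3 fin3 Mp.start w) = psim M₁ (phi w) := by
    intro w hw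
    obtain ⟨hw3, hwD⟩ := (hMpacc w).mp hw
    apply M2_left_cancel M₁ h₁
    rw [show gsmTr Mp out3 fin3 Mp.start w =
      gsmChunks Mp out3 Mp.start w ++ fin3 (Mp.evalFrom Mp.start w) from rfl]
    rw [phi_append, ← mul_assoc]
    have hchunks := hc1 w MC.start []
    rw [phi_nil, _root_.map_one, rep_one, one_mul, one_mul] at hchunks
    have hms : Mp.start =
        ((MC.start, 1) : σ₃ × Matrix (Fin 2) (Fin 2) (ZMod m)) := rfl
    have hglrep : IsGL (rep m (Ph m (phi w))) := isGL_rep m _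
    have hdomrep : DomD M₁ (rep m (Ph m (phi w))) :=
      domd_of_Ph_eq M₁ (Ph_rep m ⟨w, rfl⟩).symm hwD
    have hfin : M₁ * phi (fin3 (MC.evalFrom MC.start w, Ph m (phi w))) =
        rep m (Ph m (phi w)) * M₁ := by
      rw [hfin3]
      show M₁ * phi (wordFor (psim M₁ (rep m (Ph m (phi w))))) = _
      rw [phi_wordFor (psi_isGL M₁ h₁ hdomrep hglrep)]
      exact psim_comm M₁ h₁ hdomrep
    rw [heval, hms, hchunks, mul_assoc, hfin, psim_comm M₁ h₁ hwD, ← mul_assoc,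
      mul_assoc (phi w), intInv_mul hglrep, mul_one]
  set L₄ : Language Alph :=
    (fun w => gsmTr Mp out3 fin3 Mp.start w) '' (Mp.accepts : Set (List Alph)) with hL₄def
  have hL₄reg : L₄.IsRegular :=
    gsm_regular Mp out3 fin3 (fun _ _ => wordFor_ne_nil _) (fun _ => wordFor_ne_nil _)
  have hphiL₄ : phi '' (L₄ : Set (List Alph)) = psim M₁ '' (S₃ ∩ {C | DomD M₁ C}) := by
    ext x
    constructor
    · rintro ⟨y, ⟨w, hw, rfl⟩, rfl⟩
      refine ⟨phi w, ⟨?_, ((hMpacc w).mp hw).2⟩, (htr3 w hw).symm⟩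
      rw [← hphiL₃]
      exact ⟨w, ((hMpacc w).mp hw).1, rfl⟩
    · rintro ⟨C, ⟨hCS₃, hCD⟩, rfl⟩
      rw [← hphiL₃] at hCS₃
      obtain ⟨w, hwL₃, rfl⟩ := hCS₃
      have hw : w ∈ Mp.accepts := (hMpacc w).mpr ⟨hwL₃, hCD⟩
      exact ⟨gsmTr Mp out3 fin3 Mp.start w, ⟨w, hw, rfl⟩, htr3 w hw⟩
  -- Stage D : right multiplication by A₀
  obtain ⟨σ₄, inst₄, MD, hMD⟩ := hL₄reg
  haveI := inst₄
  set v₅ : List Alph := wordFor A₀ with hv₅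
  set L₅ : Language Alph :=
    (fun w => gsmTr MD (fun _ a => [a]) (fun _ => v₅) MD.start w) '' (MD.accepts : Set (List Alph))
    with hL₅def
  have hL₅reg : L₅.IsRegular :=
    gsm_regular MD _ _ (fun _ a => by simp) (fun _ => wordFor_ne_nil _)
  refine ⟨L₅, hL₅reg, ?_⟩
  have hphiL₅ : phi '' (L₅ : Set (List Alph)) =
      (fun C => C * A₀) '' (psim M₁ '' (S₃ ∩ {C | DomD M₁ C})) := by
    rw [hL₅def, Set.image_image (s := MD.accepts), ← hphiL₄, ← hMD,
      Set.image_image (s := MD.accepts)]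
    refine Set.image_congr fun w _ => ?_
    rw [gsmTr_concat, phi_append, hv₅, phi_wordFor hA₀gl]
  rw [hphiL₅]
  ext A
  constructor
  · rintro ⟨Y, ⟨C, ⟨hCS₃, hCD⟩, rfl⟩, rfl⟩
    obtain ⟨B', ⟨A₁, hA₁S, rfl⟩, rfl⟩ := hCS₃
    have hA₁gl := hS₁GL A₁ hA₁S
    have hCgl : IsGL (intInv A₁ * A₁₀) := isGL_mul (isGL_intInv hA₁gl) hA₁₀gl
    constructor
    · exact isGL_mul (psi_isGL M₁ h₁ hCD hCgl) hA₀gl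
    · refine ⟨A₁, hA₁S, ?_⟩
      have h5 : M₁ * psim M₁ (intInv A₁ * A₁₀) = intInv A₁ * A₁₀ * M₁ :=
        psim_comm M₁ h₁ hCD
      rw [← mul_assoc, mul_assoc A₁ M₁, h5]
      simp only [← mul_assoc]
      rw [mul_intInv hA₁gl, one_mul, hA₀eq]
  · rintro ⟨hAgl, A₁, hA₁S, heq⟩
    have hA₁gl := hS₁GL A₁ hA₁S
    have hkey : (intInv A₁ * A₁₀) * M₁ = M₁ * (A * intInv A₀) := by
      have e1 : M₁ * A = intInv A₁ * M₂ := by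
        rw [← heq]
        simp only [← mul_assoc]
        rw [intInv_mul hA₁gl, one_mul]
      have e2 : A₁₀ * M₁ = M₂ * intInv A₀ := by
        rw [← hA₀eq, mul_assoc (A₁₀ * M₁), mul_intInv hA₀gl, mul_one]
      rw [mul_assoc, e2, ← mul_assoc, ← e1, mul_assoc]
    have hCD : DomD M₁ (intInv A₁ * A₁₀) := domd_of_comm M₁ hkey
    have hpsimC : psim M₁ (intInv A₁ * A₁₀) = A * intInv A₀ := psim_of_comm M₁ h₁ hkey
    refine ⟨psim M₁ (intInv A₁ * A₁₀), ⟨intInv A₁ * A₁₀,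
      ⟨⟨intInv A₁, ⟨A₁, hA₁S, rfl⟩, rfl⟩, hCD⟩, rfl⟩, ?_⟩
    rw [hpsimC]
    show A * intInv A₀ * A₀ = A
    rw [mul_assoc, intInv_mul hA₀gl, mul_one]
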